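/- Let X be a basically disconnected compact Hausdorff space. Then the set of continuous functions X → [0,1] forms a commutative convex σ-sequential effect algebra under pointwise addition (when bounded by 1), pointwise scalar multiplication, and pointwise multiplication as the sequential product. -/
import Mathlib


/-- `x ≤ y` for a partially defined addition: there is `c` with `x + c` defined and `x + c = y`. -/
def pLe {E : Type*} (D : E → E → Prop) (add : E → E → E) (x y : E) : Prop :=
  ∃ c, D x c ∧ add x c = y

/-- An effect algebra: a partially defined commutative associative addition with zero,
the zero-one law and unique complements. `D a b` means "`a + b` is defined". -/
structure EffectAlgebra (E : Type*) where
  D : E → E → Prop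
  add : E → E → E
  zero : E
  one : E
  compl : E → E
  D_comm : ∀ {a b}, D a b → D b a
  add_comm' : ∀ {a b}, D a b → add a b = add b a
  D_assoc_left : ∀ {a b c}, D b c → D a (add b c) → D a b
  D_assoc : ∀ {a b c}, D b c → D a (add b c) → D (add a b) c
  add_assoc' : ∀ {a b c}, D b c → D a (add b c) → add a (add b c) = add (add a b) c
  D_zero : ∀ a, D a zero
  add_zero' : ∀ a, add a zero = a
  zero_one : ∀ {a}, D a one → a = zero
  D_compl : ∀ a, D a (compl a)
  add_compl : ∀ a, add a (compl a) = one
  compl_unique : ∀ {a b}, D a b → add a b = one → b = compl a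

namespace EffectAlgebra
variable {E : Type*} (EA : EffectAlgebra E)
/-- The canonical order of an effect algebra. -/
def le (a b : E) : Prop := pLe EA.D EA.add a b
end EffectAlgebra

/-- A sequential effect algebra (Gudder–Greechie): an effect algebra with a total
binary operation `seq` (the sequential product) satisfying the five axioms. -/
structure SEA (E : Type*) extends EffectAlgebra E where
  seq : E → E → E
  seq_D : ∀ {b c} (a : E), D b c → D (seq a b) (seq a c)
  seq_add : ∀ {b c} (a : E), D b c → seq a (add b c) = add (seq a b) (seq a c)
  one_seq : ∀ a, seq one a = a
  seq_orth : ∀ {a b}, seq a b = zero → seq b a = zero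
  seq_compl : ∀ {a b}, seq a b = seq b a → seq a (compl b) = seq (compl b) a
  seq_assoc : ∀ {a b}, seq a b = seq b a → ∀ c, seq a (seq b c) = seq (seq a b) c
  comm_seq : ∀ {a b c}, seq c a = seq a c → seq c b = seq b c →
    seq c (seq a b) = seq (seq a b) c
  comm_add : ∀ {a b c}, seq c a = seq a c → seq c b = seq b c → D a b →
    seq c (add a b) = seq (add a b) c

namespace SEA
variable {E : Type*} (SE : SEA E)
/-- The order of the underlying effect algebra. -/
def le (a b : E) : Prop := pLe SE.D SE.add a b
end SEA

/-- A convex sequential effect algebra: a sequential effect algebra together with a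
`[0,1]`-action (convex structure). -/
structure ConvexSEA (E : Type*) extends SEA E where
  smul : ℝ → E → E
  smul_D : ∀ {r s : ℝ} (a : E), 0 ≤ r → 0 ≤ s → r + s ≤ 1 → D (smul r a) (smul s a)
  smul_add_dist : ∀ {r s : ℝ} (a : E), 0 ≤ r → 0 ≤ s → r + s ≤ 1 →
    smul (r + s) a = add (smul r a) (smul s a)
  smul_mul : ∀ {r s : ℝ} (a : E), 0 ≤ r → r ≤ 1 → 0 ≤ s → s ≤ 1 →
    smul (r * s) a = smul r (smul s a)
  zero_smul : ∀ a, smul 0 a = zero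
  one_smul : ∀ a, smul 1 a = a
  smul_D_add : ∀ {r : ℝ} {a b : E}, 0 ≤ r → r ≤ 1 → D a b → D (smul r a) (smul r b)
  smul_add : ∀ {r : ℝ} {a b : E}, 0 ≤ r → r ≤ 1 → D a b →
    smul r (add a b) = add (smul r a) (smul r b)

/-- A sequential effect space: a convex σ-sequential effect algebra. Decreasing
sequences have infima (given by `inf`), which are preserved by the sequential
product, and under which commutation is stable. -/
structure SES (E : Type*) extends ConvexSEA E where
  inf : (ℕ → E) → E
  inf_le : ∀ {f : ℕ → E}, (∀ n, pLe D add (f (n + 1)) (f n)) →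
    ∀ n, pLe D add (inf f) (f n)
  le_inf : ∀ {f : ℕ → E}, (∀ n, pLe D add (f (n + 1)) (f n)) →
    ∀ x, (∀ n, pLe D add x (f n)) → pLe D add x (inf f)
  seq_inf : ∀ {f : ℕ → E} (b : E), (∀ n, pLe D add (f (n + 1)) (f n)) →
    seq b (inf f) = inf (fun n => seq b (f n))
  comm_inf : ∀ {f : ℕ → E} {b : E}, (∀ n, pLe D add (f (n + 1)) (f n)) →
    (∀ n, seq b (f n) = seq (f n) b) → seq b (inf f) = seq (inf f) b

namespace SES
variable {E : Type*} (SE : SES E)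
/-- The order of the underlying effect algebra of a sequential effect space. -/
def le (a b : E) : Prop := pLe SE.D SE.add a b
end SES

/-- A topological space is basically disconnected if the closure of every cozero-set
is open. -/
def BasicallyDisconnected (X : Type*) [TopologicalSpace X] : Prop :=
  ∀ f : C(X, ℝ), IsOpen (closure (f ⁻¹' Set.Ioi 0))

namespace CFSES

variable {X : Type*} [TopologicalSpace X] [CompactSpace X] [T2Space X]

abbrev EF (X : Type*) [TopologicalSpace X] := {f : C(X, ℝ) // ∀ x, f x ∈ Set.Icc (0 : ℝ) 1}

set_option linter.unusedSectionVars false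

/-- pointwise infimum -/
noncomputable def hI (f : ℕ → EF X) (x : X) : ℝ := ⨅ n, (f n).1 x

lemma hI_bdd (f : ℕ → EF X) (x : X) : BddBelow (Set.range fun n => (f n).1 x) :=
  ⟨0, by rintro r ⟨n, rfl⟩; exact ((f n).2 x).1⟩

lemma hI_le (f : ℕ → EF X) (x : X) (n : ℕ) : hI f x ≤ (f n).1 x :=
  ciInf_le (hI_bdd f x) n

lemma hI_nonneg (f : ℕ → EF X) (x : X) : 0 ≤ hI f x :=
  le_ciInf fun n => ((f n).2 x).1

def V (f : ℕ → EF X) (q : ℚ) : Set X := {x | ∃ n, (f n).1 x < (q : ℝ)}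

lemma isOpen_V (f : ℕ → EF X) (q : ℚ) : IsOpen (V f q) := by
  have : V f q = ⋃ n, {x | (f n).1 x < (q : ℝ)} := Set.setOf_exists _
  rw [this]
  exact isOpen_iUnion fun n => isOpen_lt (f n).1.continuous continuous_const

lemma mem_V_two (f : ℕ → EF X) (x : X) : x ∈ V f 2 :=
  ⟨0, by have := ((f 0).2 x).2; push_cast; linarith⟩

lemma V_mono (f : ℕ → EF X) {p q : ℚ} (h : p ≤ q) : V f p ⊆ V f q := by
  rintro x ⟨n, hn⟩
  exact ⟨n, lt_of_lt_of_le hn (by exact_mod_cast h)⟩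

lemma cozero (f : ℕ → EF X) (q : ℚ) : ∃ F : C(X, ℝ), F ⁻¹' Set.Ioi 0 = V f q := by
  set w : ℕ → X → ℝ :=
    fun n x => (2⁻¹ : ℝ) ^ n * min (max ((q : ℝ) - (f n).1 x) 0) 1 with hw
  have hw_nonneg : ∀ n x, 0 ≤ w n x := fun n x =>
    mul_nonneg (by positivity) (le_min (le_max_right _ _) one_pos.le)
  have hw_le : ∀ n x, w n x ≤ (2⁻¹ : ℝ) ^ n := fun n x => by
    have h1 : min (max ((q : ℝ) - (f n).1 x) 0) 1 ≤ 1 := min_le_right _ _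
    have h0 : (0:ℝ) ≤ (2⁻¹:ℝ)^n := by positivity
    exact mul_le_of_le_one_right h0 h1
  have hsum : Summable fun n : ℕ => (2⁻¹ : ℝ) ^ n :=
    summable_geometric_of_lt_one (by norm_num) (by norm_num)
  have hbound : ∀ n x, ‖w n x‖ ≤ (2⁻¹ : ℝ) ^ n := fun n x => by
    rw [Real.norm_eq_abs, abs_of_nonneg (hw_nonneg n x)]; exact hw_le n x
  have hcont : ∀ n, Continuous (w n) := fun n => by
    apply Continuous.mul continuous_const
    exact ((continuous_const.sub (f n).1.continuous).max continuous_const).min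
      continuous_const
  have hsummx : ∀ x, Summable fun n => w n x := fun x =>
    Summable.of_nonneg_of_le (fun n => hw_nonneg n x) (fun n => hw_le n x) hsum
  refine ⟨⟨fun x => ∑' n, w n x, continuous_tsum hcont hsum hbound⟩, ?_⟩
  ext x
  simp only [Set.mem_preimage, Set.mem_Ioi, ContinuousMap.coe_mk, V, Set.mem_setOf_eq]
  constructor
  · intro hpos
    by_contra hne
    push_neg at hne
    have : ∀ n, w n x = 0 := by
      intro n
      have : max ((q : ℝ) - (f n).1 x) 0 = 0 := max_eq_right (by linarith [hne n])
      simp [hw, this]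
    simp [tsum_congr this] at hpos
  · rintro ⟨n, hn⟩
    have hpos : 0 < w n x := by
      apply mul_pos (by positivity)
      exact lt_min (lt_max_of_lt_left (by linarith)) one_pos
    exact lt_of_lt_of_le hpos (Summable.le_tsum (hsummx x) n fun m _ => hw_nonneg m x)

def U (f : ℕ → EF X) (q : ℚ) : Set X := closure (V f q)

lemma isClosed_U (f : ℕ → EF X) (q : ℚ) : IsClosed (U f q) := isClosed_closure

lemma isOpen_U (hX : BasicallyDisconnected X) (f : ℕ → EF X) (q : ℚ) :
    IsOpen (U f q) := by
  obtain ⟨F, hF⟩ := cozero f q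
  rw [U, ← hF]
  exact hX F

lemma U_mono (f : ℕ → EF X) {p q : ℚ} (h : p ≤ q) : U f p ⊆ U f q :=
  closure_mono (V_mono f h)

lemma pos_of_mem_U (f : ℕ → EF X) {q : ℚ} {x : X} (hx : x ∈ U f q) : (0:ℝ) < q := by
  obtain ⟨y, n, hy⟩ := closure_nonempty_iff.mp ⟨x, hx⟩
  exact lt_of_le_of_lt ((f n).2 y).1 hy

noncomputable def gI (f : ℕ → EF X) (x : X) : ℝ :=
  sInf ((fun q : ℚ => (q : ℝ)) '' {q | x ∈ U f q})

lemma S_nonempty (f : ℕ → EF X) (x : X) :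
    ((fun q : ℚ => (q : ℝ)) '' {q | x ∈ U f q}).Nonempty :=
  ⟨2, 2, subset_closure (mem_V_two f x), by norm_num⟩

lemma S_bdd (f : ℕ → EF X) (x : X) :
    BddBelow ((fun q : ℚ => (q : ℝ)) '' {q | x ∈ U f q}) := by
  refine ⟨0, ?_⟩
  rintro r ⟨q, hq, rfl⟩
  exact (pos_of_mem_U f hq).le

lemma gI_nonneg (f : ℕ → EF X) (x : X) : 0 ≤ gI f x :=
  le_csInf (S_nonempty f x) (by rintro r ⟨q, hq, rfl⟩; exact (pos_of_mem_U f hq).le)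

lemma gI_le (f : ℕ → EF X) {q : ℚ} {x : X} (hx : x ∈ U f q) : gI f x ≤ q :=
  csInf_le (S_bdd f x) ⟨q, hx, rfl⟩

lemma le_gI (f : ℕ → EF X) {q : ℚ} {x : X} (hx : x ∉ U f q) : (q : ℝ) ≤ gI f x := by
  apply le_csInf (S_nonempty f x)
  rintro r ⟨p, hp, rfl⟩
  by_contra h
  push_neg at h
  have h2 : ((p:ℝ)) ≤ (q:ℝ) := h.le
  exact hx (U_mono f (by exact_mod_cast h2) hp)

lemma gI_le_hI (f : ℕ → EF X) (x : X) : gI f x ≤ hI f x := by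
  by_contra h
  push_neg at h
  obtain ⟨q, hq1, hq2⟩ := exists_rat_btwn h
  obtain ⟨n, hn⟩ := exists_lt_of_ciInf_lt hq1
  exact absurd (gI_le f (subset_closure ⟨n, hn⟩)) (not_le.mpr hq2)

lemma gI_le_one (f : ℕ → EF X) (x : X) : gI f x ≤ 1 :=
  (gI_le_hI f x).trans ((hI_le f x 0).trans ((f 0).2 x).2)

lemma continuous_gI (hX : BasicallyDisconnected X) (f : ℕ → EF X) :
    Continuous (gI f) := by
  rw [continuous_iff_continuousAt]
  intro x
  rw [ContinuousAt, Metric.tendsto_nhds]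
  intro ε hε
  -- choose q' below gI f x
  obtain ⟨q', hq'1, hq'2⟩ := exists_rat_btwn (show gI f x - ε < gI f x by linarith)
  have hxq' : x ∉ U f q' := fun hmem => absurd (gI_le f hmem) (not_le.mpr hq'2)
  -- choose p with x ∈ U f p and p < gI f x + ε
  obtain ⟨r, ⟨p, hp, rfl⟩, hr2⟩ :=
    exists_lt_of_csInf_lt (S_nonempty f x) (show gI f x < gI f x + ε by linarith)
  have hN : IsOpen (U f p ∩ (U f q')ᶜ) :=
    (isOpen_U hX f p).inter (isClosed_U f q').isOpen_compl
  have hxN : x ∈ U f p ∩ (U f q')ᶜ := ⟨hp, hxq'⟩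
  filter_upwards [hN.mem_nhds hxN] with y hy
  have h1 : gI f y ≤ p := gI_le f hy.1
  have h2 : (q' : ℝ) ≤ gI f y := le_gI f hy.2
  rw [Real.dist_eq, abs_lt]
  constructor <;> linarith

lemma dense_eq (hX : BasicallyDisconnected X) (f : ℕ → EF X) :
    Dense {x | gI f x = hI f x} := by
  have hD : Dense (⋂ q : ℚ, (V f q ∪ (U f q)ᶜ)) := by
    apply dense_iInter_of_isOpen
    · exact fun q => (isOpen_V f q).union (isClosed_U f q).isOpen_compl
    · intro q x
      by_cases hx : x ∈ U f q
      · exact closure_mono Set.subset_union_left hx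
      · exact subset_closure (Set.mem_union_right _ hx)
  apply hD.mono
  intro x hx
  simp only [Set.mem_setOf_eq]
  refine le_antisymm (gI_le_hI f x) ?_
  by_contra h
  push_neg at h
  obtain ⟨q, hq1, hq2⟩ := exists_rat_btwn h
  -- x ∈ U f q
  obtain ⟨r, ⟨p, hp, rfl⟩, hr2⟩ := exists_lt_of_csInf_lt (S_nonempty f x) hq1
  have hr2' : ((p:ℝ)) ≤ (q:ℝ) := hr2.le
  have hpq : p ≤ q := by exact_mod_cast hr2'
  have hxq : x ∈ U f q := U_mono f hpq hp
  have hx' := Set.mem_iInter.mp hx q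
  rcases hx' with hV | hU
  · obtain ⟨n, hn⟩ := hV
    exact absurd (lt_of_le_of_lt (hI_le f x n) hn) (not_lt.mpr hq2.le)
  · exact hU hxq

noncomputable def gIE (hX : BasicallyDisconnected X) (f : ℕ → EF X) : EF X :=
  ⟨⟨gI f, continuous_gI hX f⟩, fun x => ⟨gI_nonneg f x, gI_le_one f x⟩⟩

lemma le_gIE (hX : BasicallyDisconnected X) (f : ℕ → EF X) (c : EF X)
    (hc : ∀ n x, c.1 x ≤ (f n).1 x) (x : X) : c.1 x ≤ gI f x := by
  have hsub : {x | gI f x = hI f x} ⊆ {x | c.1 x ≤ gI f x} := by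
    intro y hy
    simp only [Set.mem_setOf_eq] at hy ⊢
    rw [hy]
    exact le_ciInf fun n => hc n y
  exact closure_minimal hsub
    (isClosed_le c.1.continuous (continuous_gI hX f)) (dense_eq hX f x)

lemma gIE_mul (hX : BasicallyDisconnected X) (b : EF X) (f g : ℕ → EF X)
    (hg : ∀ n x, (g n).1 x = b.1 x * (f n).1 x) (x : X) :
    gI g x = b.1 x * gI f x := by
  have hbc : Continuous fun y => b.1 y * gI f y :=
    b.1.continuous.mul (continuous_gI hX f)
  refine le_antisymm ?_ ?_
  · -- gI g ≤ b * gI f, via density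
    have hsub : {y | gI f y = hI f y} ⊆ {y | gI g y ≤ b.1 y * gI f y} := by
      intro y hy
      simp only [Set.mem_setOf_eq] at hy ⊢
      have h1 : gI g y ≤ hI g y := gI_le_hI g y
      have h2 : hI g y = b.1 y * hI f y := by
        rw [hI, hI, iInf_congr fun n => hg n y]
        exact (Real.mul_iInf_of_nonneg ((b.2 y).1) _).symm
      rw [hy]
      rw [h2] at h1
      exact h1
    exact closure_minimal hsub
      (isClosed_le (continuous_gI hX g) hbc) (dense_eq hX f x)
  · -- b * gI f ≤ gI g : b * gI f is a lower bound of g n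
    have hc : ∀ y : X, b.1 y * gI f y ∈ Set.Icc (0:ℝ) 1 := fun y =>
      ⟨mul_nonneg (b.2 y).1 (gI_nonneg f y),
        mul_le_one₀ (b.2 y).2 (gI_nonneg f y) (gI_le_one f y)⟩
    have := le_gIE hX g ⟨⟨fun y => b.1 y * gI f y, hbc⟩, hc⟩ (fun n y => by
      rw [hg n y]
      exact mul_le_mul_of_nonneg_left ((gI_le_hI f y).trans (hI_le f y n)) (b.2 y).1) x
    exact this


/-! ### Effect algebra operations -/

def dD (f g : EF X) : Prop := ∀ x, f.1 x + g.1 x ≤ 1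

noncomputable def addE (f g : EF X) : EF X :=
  ⟨⟨fun x => min (f.1 x + g.1 x) 1,
      (f.1.continuous.add g.1.continuous).min continuous_const⟩,
    fun x => ⟨le_min (add_nonneg (f.2 x).1 (g.2 x).1) one_pos.le, min_le_right _ _⟩⟩

def zeroE : EF X := ⟨⟨fun _ => 0, continuous_const⟩, fun _ => ⟨le_refl 0, one_pos.le⟩⟩

def oneE : EF X := ⟨⟨fun _ => 1, continuous_const⟩, fun _ => ⟨one_pos.le, le_refl 1⟩⟩

def complE (f : EF X) : EF X :=
  ⟨⟨fun x => 1 - f.1 x, continuous_const.sub f.1.continuous⟩,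
    fun x => by
      simp only [ContinuousMap.coe_mk, Set.mem_Icc]
      constructor <;> linarith [(f.2 x).1, (f.2 x).2]⟩

def seqE (f g : EF X) : EF X :=
  ⟨⟨fun x => f.1 x * g.1 x, f.1.continuous.mul g.1.continuous⟩,
    fun x => ⟨mul_nonneg (f.2 x).1 (g.2 x).1,
      mul_le_one₀ (f.2 x).2 (g.2 x).1 (g.2 x).2⟩⟩

def smulE (r : ℝ) (f : EF X) : EF X :=
  ⟨⟨fun x => min (max r 0) 1 * f.1 x, continuous_const.mul f.1.continuous⟩,
    fun x => ⟨mul_nonneg (le_min (le_max_right _ _) one_pos.le) (f.2 x).1,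
      mul_le_one₀ (min_le_right _ _) (f.2 x).1 (f.2 x).2⟩⟩

lemma clamp_eq {r : ℝ} (h0 : 0 ≤ r) (h1 : r ≤ 1) : min (max r 0) 1 = r := by
  rw [max_eq_left h0, min_eq_left h1]

lemma ext2 {f g : EF X} (h : ∀ x, f.1 x = g.1 x) : f = g :=
  Subtype.ext (ContinuousMap.ext h)

lemma pLe_iff (f g : EF X) : pLe (dD (X := X)) addE f g ↔ ∀ x, f.1 x ≤ g.1 x := by
  constructor
  · rintro ⟨c, hD, rfl⟩ x
    show f.1 x ≤ min (f.1 x + c.1 x) 1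
    rw [min_eq_left (hD x)]
    linarith [(c.2 x).1]
  · intro h
    refine ⟨⟨⟨fun x => g.1 x - f.1 x, g.1.continuous.sub f.1.continuous⟩,
        fun x => by
          simp only [ContinuousMap.coe_mk, Set.mem_Icc]
          constructor <;> linarith [h x, (g.2 x).2, (f.2 x).1]⟩,
      fun x => by show f.1 x + (g.1 x - f.1 x) ≤ 1; linarith [(g.2 x).2], ?_⟩
    apply ext2
    intro x
    show min (f.1 x + (g.1 x - f.1 x)) 1 = g.1 x
    rw [add_sub_cancel]
    exact min_eq_left (g.2 x).2

noncomputable def theSES (hX : BasicallyDisconnected X) : SES (EF X) where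
  D := dD
  add := addE
  zero := zeroE
  one := oneE
  compl := complE
  D_comm := fun {a b} h x => by have := h x; linarith
  add_comm' := fun {a b} _ => ext2 fun x => by
    show min (a.1 x + b.1 x) 1 = min (b.1 x + a.1 x) 1
    rw [add_comm]
  D_assoc_left := fun {a b c} h1 h2 x => by
    have h2x : a.1 x + min (b.1 x + c.1 x) 1 ≤ 1 := h2 x
    rw [min_eq_left (h1 x)] at h2x
    linarith [(c.2 x).1]
  D_assoc := fun {a b c} h1 h2 x => by
    have h2x : a.1 x + min (b.1 x + c.1 x) 1 ≤ 1 := h2 x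
    rw [min_eq_left (h1 x)] at h2x
    have hab : a.1 x + b.1 x ≤ 1 := by linarith [(c.2 x).1]
    show min (a.1 x + b.1 x) 1 + c.1 x ≤ 1
    rw [min_eq_left hab]
    linarith
  add_assoc' := fun {a b c} h1 h2 => ext2 fun x => by
    have h2x : a.1 x + min (b.1 x + c.1 x) 1 ≤ 1 := h2 x
    rw [min_eq_left (h1 x)] at h2x
    have hab : a.1 x + b.1 x ≤ 1 := by linarith [(c.2 x).1]
    show min (a.1 x + min (b.1 x + c.1 x) 1) 1 = min (min (a.1 x + b.1 x) 1 + c.1 x) 1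
    rw [min_eq_left (h1 x), min_eq_left hab, add_assoc]
  D_zero := fun a x => by show a.1 x + 0 ≤ 1; rw [add_zero]; exact (a.2 x).2
  add_zero' := fun a => ext2 fun x => by
    show min (a.1 x + 0) 1 = a.1 x
    rw [add_zero]; exact min_eq_left (a.2 x).2
  zero_one := fun {a} h => ext2 fun x => by
    have hx : a.1 x + 1 ≤ 1 := h x
    show a.1 x = 0
    linarith [(a.2 x).1]
  D_compl := fun a x => by show a.1 x + (1 - a.1 x) ≤ 1; linarith
  add_compl := fun a => ext2 fun x => by
    show min (a.1 x + (1 - a.1 x)) 1 = 1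
    rw [add_sub_cancel]; exact min_self 1
  compl_unique := fun {a b} h hab => ext2 fun x => by
    have h1 : min (a.1 x + b.1 x) 1 = 1 := congrArg (fun z : EF X => z.1 x) hab
    rw [min_eq_left (h x)] at h1
    show b.1 x = 1 - a.1 x
    linarith
  seq := seqE
  seq_D := fun {b c} a h x => by
    show a.1 x * b.1 x + a.1 x * c.1 x ≤ 1
    nlinarith [(a.2 x).1, (a.2 x).2, (b.2 x).1, (c.2 x).1, h x]
  seq_add := fun {b c} a h => ext2 fun x => by
    have h2 : a.1 x * b.1 x + a.1 x * c.1 x ≤ 1 := by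
      nlinarith [(a.2 x).1, (a.2 x).2, (b.2 x).1, (c.2 x).1, h x]
    show a.1 x * min (b.1 x + c.1 x) 1 = min (a.1 x * b.1 x + a.1 x * c.1 x) 1
    rw [min_eq_left (h x), min_eq_left h2, mul_add]
  one_seq := fun a => ext2 fun x => one_mul _
  seq_orth := fun {a b} h => ext2 fun x => by
    have h1 : a.1 x * b.1 x = 0 := congrArg (fun z : EF X => z.1 x) h
    show b.1 x * a.1 x = 0
    rw [mul_comm]; exact h1
  seq_compl := fun {a b} _ => ext2 fun x => mul_comm _ _
  seq_assoc := fun {a b} _ c => ext2 fun x => (mul_assoc _ _ _).symm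
  comm_seq := fun {a b c} _ _ => ext2 fun x => mul_comm _ _
  comm_add := fun {a b c} _ _ _ => ext2 fun x => mul_comm _ _
  smul := smulE
  smul_D := fun {r s} a hr hs hrs x => by
    show min (max r 0) 1 * a.1 x + min (max s 0) 1 * a.1 x ≤ 1
    rw [clamp_eq hr (by linarith), clamp_eq hs (by linarith)]
    nlinarith [(a.2 x).1, (a.2 x).2]
  smul_add_dist := fun {r s} a hr hs hrs => ext2 fun x => by
    show min (max (r + s) 0) 1 * a.1 x
        = min (min (max r 0) 1 * a.1 x + min (max s 0) 1 * a.1 x) 1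
    rw [clamp_eq hr (by linarith), clamp_eq hs (by linarith),
      clamp_eq (by linarith) hrs,
      min_eq_left (by nlinarith [(a.2 x).1, (a.2 x).2])]
    ring
  smul_mul := fun {r s} a hr0 hr1 hs0 hs1 => ext2 fun x => by
    show min (max (r * s) 0) 1 * a.1 x = min (max r 0) 1 * (min (max s 0) 1 * a.1 x)
    rw [clamp_eq (mul_nonneg hr0 hs0) (by nlinarith), clamp_eq hr0 hr1,
      clamp_eq hs0 hs1, mul_assoc]
  zero_smul := fun a => ext2 fun x => by
    show min (max 0 0) 1 * a.1 x = 0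
    norm_num
  one_smul := fun a => ext2 fun x => by
    show min (max 1 0) 1 * a.1 x = a.1 x
    norm_num
  smul_D_add := fun {r a b} h0 h1 hD x => by
    show min (max r 0) 1 * a.1 x + min (max r 0) 1 * b.1 x ≤ 1
    rw [clamp_eq h0 h1]
    nlinarith [hD x, (a.2 x).1, (b.2 x).1]
  smul_add := fun {r a b} h0 h1 hD => ext2 fun x => by
    show min (max r 0) 1 * min (a.1 x + b.1 x) 1
        = min (min (max r 0) 1 * a.1 x + min (max r 0) 1 * b.1 x) 1
    rw [clamp_eq h0 h1, min_eq_left (hD x),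
      min_eq_left (by nlinarith [hD x, (a.2 x).1, (b.2 x).1]), mul_add]
  inf := fun f => gIE hX f
  inf_le := fun {f} _ n => (pLe_iff _ _).mpr fun x => (gI_le_hI f x).trans (hI_le f x n)
  le_inf := fun {f} _ c hc => (pLe_iff _ _).mpr
    (le_gIE hX f c fun n x => (pLe_iff _ _).mp (hc n) x)
  seq_inf := fun {f} b _ => ext2 fun x =>
    (gIE_mul hX b f (fun n => seqE b (f n)) (fun _ _ => rfl) x).symm
  comm_inf := fun {f b} _ _ => ext2 fun x => mul_comm _ _

end CFSES

/-- For a basically disconnected compact Hausdorff space `X`, the continuous functions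
`X → [0,1]` form a commutative convex σ-sequential effect algebra under pointwise
operations, with pointwise multiplication as the sequential product. -/
theorem continuousFunctions_SES (X : Type*) [TopologicalSpace X] [CompactSpace X]
    [T2Space X] (hX : BasicallyDisconnected X) :
    ∃ SE : SES {f : C(X, ℝ) // ∀ x, f x ∈ Set.Icc (0 : ℝ) 1},
      (∀ f g, SE.D f g ↔ ∀ x, f.1 x + g.1 x ≤ 1) ∧
      (∀ f g, SE.D f g → ∀ x, (SE.add f g).1 x = f.1 x + g.1 x) ∧
      (∀ f x, (SE.compl f).1 x = 1 - f.1 x) ∧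
      (∀ x, SE.zero.1 x = 0) ∧ (∀ x, SE.one.1 x = 1) ∧
      (∀ (r : ℝ) f x, 0 ≤ r → r ≤ 1 → (SE.smul r f).1 x = r * f.1 x) ∧
      (∀ f g x, (SE.seq f g).1 x = f.1 x * g.1 x) ∧
      (∀ f g, SE.seq f g = SE.seq g f) := by
  refine ⟨CFSES.theSES hX, fun f g => Iff.rfl, fun f g h x => min_eq_left (h x),
    fun f x => rfl, fun x => rfl, fun x => rfl,
    fun r f x h0 h1 => by
      show min (max r 0) 1 * f.1 x = r * f.1 x
      rw [CFSES.clamp_eq h0 h1],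
    fun f g x => rfl, fun f g => CFSES.ext2 fun x => mul_comm _ _⟩
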